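/- Let (X,d,μ) be a doubling metric measure space with dimension n and m ≥ 2, and let (p_t)_{t>0} be jointly measurable kernels satisfying: p_t(x,y) ≥ 0 for all t, x, y; ∫_X p_t(x,y) dμ(y) ≤ 1 for all t > 0 and x ∈ X; the semigroup (Chapman–Kolmogorov) identity ∫_X p_t(x,z) p_r(z,y) dμ(z) = p_{t+r}(x,y) for all t, r > 0 and x, y ∈ X; and the m-order Gaussian upper bound (GE_m). For a bounded measurable f : X → ℂ set S_t f(x) := ∫_X p_t(x,y) f(y) dμ(y). Then there exists C > 0, independent of f, such that sup_{t>0} sup_{x∈X} ( ⨍_{B(x,t^{1/m})} | f(y) − 2 S_t f(y) + S_{2t} f(y) |² dμ(y) )^{1/2} ≤ C · sup_{t>0} sup_{x∈X} ( ⨍_{B(x,t^{1/m})} | f(y) − S_t f(y) |² dμ(y) )^{1/2}. (Note f − 2S_t f + S_{2t} f = (I − S_t)² f.) -/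

import Mathlib

open Metric MeasureTheory ENNReal

lemma bmo_aux_pointwise (a b c : ℂ) :
    (‖a - 2*b + c‖₊ : ℝ≥0∞)^2 ≤ 8 * (‖a - b‖₊ : ℝ≥0∞)^2 + 2 * (‖a - c‖₊ : ℝ≥0∞)^2 := by
  have h : ‖a - 2*b + c‖ ≤ 2*‖a-b‖ + ‖a-c‖ := by
    have he : a - 2*b + c = 2*(a-b) - (a-c) := by ring
    rw [he]
    calc ‖2*(a-b) - (a-c)‖ ≤ ‖2*(a-b)‖ + ‖a-c‖ := norm_sub_le _ _
      _ = 2*‖a-b‖ + ‖a-c‖ := by rw [norm_mul]; norm_num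
  have h2 : ‖a - 2*b + c‖^2 ≤ 8*‖a-b‖^2 + 2*‖a-c‖^2 := by
    nlinarith [sq_nonneg (2*‖a-b‖ - ‖a-c‖), norm_nonneg (a-2*b+c), norm_nonneg (a-b),
      norm_nonneg (a-c), h]
  calc (‖a - 2*b + c‖₊ : ℝ≥0∞)^2 = ENNReal.ofReal (‖a - 2*b + c‖^2) := by
        rw [← (fun x : ℂ => (ofReal_norm x).trans (enorm_eq_nnnorm x)), ← ENNReal.ofReal_pow (norm_nonneg _)]
    _ ≤ ENNReal.ofReal (8*‖a-b‖^2 + 2*‖a-c‖^2) := ENNReal.ofReal_le_ofReal h2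
    _ = 8 * (‖a-b‖₊ : ℝ≥0∞)^2 + 2 * (‖a-c‖₊ : ℝ≥0∞)^2 := by
        rw [ENNReal.ofReal_add (by positivity) (by positivity),
          ENNReal.ofReal_mul (by norm_num), ENNReal.ofReal_mul (by norm_num),
          ENNReal.ofReal_pow (norm_nonneg _), ENNReal.ofReal_pow (norm_nonneg _),
          (fun x : ℂ => (ofReal_norm x).trans (enorm_eq_nnnorm x)), (fun x : ℂ => (ofReal_norm x).trans (enorm_eq_nnnorm x))]
        norm_num

theorem bmo_second_order_dominated_by_first_order
    {X : Type*} [MetricSpace X] [MeasurableSpace X] [BorelSpace X]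
    (μ : Measure X)
    (hball : ∀ (x : X) (r : ℝ), 0 < r → 0 < μ (ball x r) ∧ μ (ball x r) < ⊤)
    (Cd n : ℝ) (hCd : 0 < Cd) (hn : 0 < n)
    (hdoub : ∀ (x : X) (r lam : ℝ), 0 < r → 1 ≤ lam →
      μ (ball x (lam * r)) ≤ ENNReal.ofReal (Cd * lam ^ n) * μ (ball x r))
    (m : ℝ) (hm : 2 ≤ m)
    (p : ℝ → X → X → ℝ)
    (hmeas : ∀ t : ℝ, 0 < t → Measurable (Function.uncurry (p t)))
    (hpos : ∀ t : ℝ, 0 < t → ∀ x y : X, 0 ≤ p t x y)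
    (hsubmarkov : ∀ t : ℝ, 0 < t → ∀ x : X,
      (∫⁻ y, ENNReal.ofReal (p t x y) ∂μ) ≤ 1)
    (hCK : ∀ t r : ℝ, 0 < t → 0 < r → ∀ x y : X,
      (∫ z, p t x z * p r z y ∂μ) = p (t + r) x y)
    (CG cG : ℝ) (hCG : 0 < CG) (hcG : 0 < cG)
    (hGE : ∀ t : ℝ, 0 < t → ∀ x y : X,
      |p t x y| ≤ CG / (μ (ball x (t ^ (1 / m)))).toReal *
        Real.exp (-cG * (dist x y ^ m / t) ^ (1 / (m - 1)))) :
    ∃ C > (0 : ℝ),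
      ∀ f : X → ℂ, Measurable f → (∃ Cb : ℝ, ∀ y : X, ‖f y‖ ≤ Cb) →
        (⨆ (t : ℝ) (_ : 0 < t) (x : X),
            ((μ (ball x (t ^ (1 / m))))⁻¹ *
                ∫⁻ y in ball x (t ^ (1 / m)),
                  (‖f y - 2 * (∫ w, (p t y w : ℂ) * f w ∂μ) +
                      ∫ w, (p (2 * t) y w : ℂ) * f w ∂μ‖₊ : ℝ≥0∞) ^ 2 ∂μ) ^
              ((1 : ℝ) / 2)) ≤
          ENNReal.ofReal C *
            ⨆ (t : ℝ) (_ : 0 < t) (x : X),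
              ((μ (ball x (t ^ (1 / m))))⁻¹ *
                  ∫⁻ y in ball x (t ^ (1 / m)),
                    (‖f y - ∫ w, (p t y w : ℂ) * f w ∂μ‖₊ : ℝ≥0∞) ^ 2 ∂μ) ^
                ((1 : ℝ) / 2) := by
  classical
  have hm0 : (0:ℝ) < m := lt_of_lt_of_le two_pos hm
  set lam : ℝ := (2:ℝ) ^ ((1:ℝ)/m) with hlam_def
  have hlam_pos : 0 < lam := Real.rpow_pos_of_pos two_pos _
  have hlam : 1 ≤ lam := Real.one_le_rpow one_le_two (by positivity)
  set KR : ℝ := Cd * lam ^ n with hKR_def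
  have hKRpos : 0 < KR := mul_pos hCd (Real.rpow_pos_of_pos hlam_pos n)
  set C : ℝ := (8:ℝ) ^ ((1:ℝ)/2) + (2*KR) ^ ((1:ℝ)/2) with hC_def
  have hCpos : 0 < C :=
    add_pos (Real.rpow_pos_of_pos (by norm_num) _) (Real.rpow_pos_of_pos (by linarith) _)
  refine ⟨C, hCpos, ?_⟩
  intro f hf _hb
  rcases isEmpty_or_nonempty X with hX | hne
  · have : (⨆ (t : ℝ) (_ : 0 < t) (x : X),
        ((μ (ball x (t ^ (1 / m))))⁻¹ *
            ∫⁻ y in ball x (t ^ (1 / m)),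
              (‖f y - 2 * (∫ w, (p t y w : ℂ) * f w ∂μ) +
                  ∫ w, (p (2 * t) y w : ℂ) * f w ∂μ‖₊ : ℝ≥0∞) ^ 2 ∂μ) ^
          ((1 : ℝ) / 2)) = 0 := by
      simp
    rw [this]; exact zero_le
  obtain ⟨x₀⟩ := hne
  -- σ-finiteness of μ
  have hσ : SigmaFinite μ := by
    refine MeasureTheory.Measure.sigmaFinite_of_countable (S := Set.range fun k : ℕ => ball x₀ ((k:ℝ)+1))
      (Set.countable_range _) ?_ ?_
    · rintro s ⟨k, rfl⟩; exact (hball x₀ ((k:ℝ)+1) (by positivity)).2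
    · apply Set.eq_univ_of_forall
      intro y
      obtain ⟨k, hk⟩ := exists_nat_gt (dist y x₀)
      exact Set.mem_sUnion.2 ⟨ball x₀ ((k:ℝ)+1), ⟨k, rfl⟩,
        mem_ball.2 (hk.trans (lt_add_one _))⟩
  -- measurability of y ↦ S_t f y
  have hSf : ∀ t : ℝ, 0 < t → Measurable (fun y => ∫ w, (p t y w : ℂ) * f w ∂μ) := by
    intro t ht
    have hint : StronglyMeasurable (fun q : X × X => ((p t q.1 q.2 : ℝ) : ℂ) * f q.2) :=
      ((Complex.measurable_ofReal.comp (hmeas t ht)).mul (hf.comp measurable_snd)).stronglyMeasurable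
    exact hint.integral_prod_right'.measurable
  set N := ⨆ (t : ℝ) (_ : 0 < t) (x : X),
      ((μ (ball x (t ^ (1 / m))))⁻¹ *
          ∫⁻ y in ball x (t ^ (1 / m)),
            (‖f y - ∫ w, (p t y w : ℂ) * f w ∂μ‖₊ : ℝ≥0∞) ^ 2 ∂μ) ^
        ((1 : ℝ) / 2) with hN_def
  refine iSup_le fun t => iSup_le fun ht => iSup_le fun x => ?_
  set r : ℝ := t ^ ((1:ℝ)/m) with hr_def
  have hr : 0 < r := Real.rpow_pos_of_pos ht _
  have hlr : (2*t) ^ ((1:ℝ)/m) = lam * r := by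
    rw [hr_def, hlam_def, Real.mul_rpow (by norm_num) ht.le]
  set B := ball x r with hB_def
  set Bbig := ball x (lam * r) with hBbig_def
  have hBsub : B ⊆ Bbig := ball_subset_ball (le_mul_of_one_le_left hr.le hlam)
  set u : X → ℂ := fun y => f y - ∫ w, (p t y w : ℂ) * f w ∂μ with hu_def
  set v : X → ℂ := fun y => f y - ∫ w, (p (2*t) y w : ℂ) * f w ∂μ with hv_def
  have hu_meas : Measurable fun y => (‖u y‖₊ : ℝ≥0∞) ^ 2 :=
    ((hf.sub (hSf t ht)).nnnorm.coe_nnreal_ennreal).pow_const 2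
  have hv_meas : Measurable fun y => (‖v y‖₊ : ℝ≥0∞) ^ 2 :=
    ((hf.sub (hSf (2*t) (by linarith))).nnnorm.coe_nnreal_ennreal).pow_const 2
  -- integral splitting
  have hsplit : (∫⁻ y in B,
      (‖f y - 2 * (∫ w, (p t y w : ℂ) * f w ∂μ) +
          ∫ w, (p (2 * t) y w : ℂ) * f w ∂μ‖₊ : ℝ≥0∞) ^ 2 ∂μ)
      ≤ 8 * (∫⁻ y in B, (‖u y‖₊ : ℝ≥0∞) ^ 2 ∂μ)
        + 2 * (∫⁻ y in B, (‖v y‖₊ : ℝ≥0∞) ^ 2 ∂μ) := by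
    calc (∫⁻ y in B,
        (‖f y - 2 * (∫ w, (p t y w : ℂ) * f w ∂μ) +
            ∫ w, (p (2 * t) y w : ℂ) * f w ∂μ‖₊ : ℝ≥0∞) ^ 2 ∂μ)
        ≤ ∫⁻ y in B, (8 * (‖u y‖₊ : ℝ≥0∞) ^ 2 + 2 * (‖v y‖₊ : ℝ≥0∞) ^ 2) ∂μ :=
          lintegral_mono fun y => bmo_aux_pointwise (f y) _ _
      _ = 8 * (∫⁻ y in B, (‖u y‖₊ : ℝ≥0∞) ^ 2 ∂μ)
            + 2 * (∫⁻ y in B, (‖v y‖₊ : ℝ≥0∞) ^ 2 ∂μ) := by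
          rw [lintegral_add_left (hu_meas.const_mul 8), lintegral_const_mul 8 hu_meas,
            lintegral_const_mul 2 hv_meas]
  -- measure comparison
  set K : ℝ≥0∞ := ENNReal.ofReal KR with hK_def
  have hK0 : K ≠ 0 := (ENNReal.ofReal_pos.2 hKRpos).ne'
  have hKtop : K ≠ ⊤ := ENNReal.ofReal_ne_top
  have hd : μ Bbig ≤ K * μ B := hdoub x r lam hr hlam
  have hinv : (μ B)⁻¹ ≤ K * (μ Bbig)⁻¹ := by
    calc (μ B)⁻¹ = K * (K * μ B)⁻¹ := by
          rw [ENNReal.mul_inv (Or.inl hK0) (Or.inl hKtop), ← mul_assoc,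
            ENNReal.mul_inv_cancel hK0 hKtop, one_mul]
      _ ≤ K * (μ Bbig)⁻¹ := mul_le_mul_right (ENNReal.inv_le_inv' hd) _
  have hIv : (∫⁻ y in B, (‖v y‖₊ : ℝ≥0∞) ^ 2 ∂μ) ≤ ∫⁻ y in Bbig, (‖v y‖₊ : ℝ≥0∞) ^ 2 ∂μ :=
    lintegral_mono_set hBsub
  -- the two first-order terms are bounded by N
  have h1 : ((μ B)⁻¹ * ∫⁻ y in B, (‖u y‖₊ : ℝ≥0∞) ^ 2 ∂μ) ^ ((1:ℝ)/2) ≤ N := by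
    rw [hN_def]
    exact le_iSup_of_le t (le_iSup_of_le ht (le_iSup_of_le x (le_of_eq rfl)))
  have h2 : ((μ Bbig)⁻¹ * ∫⁻ y in Bbig, (‖v y‖₊ : ℝ≥0∞) ^ 2 ∂μ) ^ ((1:ℝ)/2) ≤ N := by
    rw [hN_def]
    refine le_iSup_of_le (2*t) (le_iSup_of_le (by linarith) (le_iSup_of_le x ?_))
    rw [hlr]
  -- assemble
  have hmain : (μ B)⁻¹ *
      (∫⁻ y in B,
        (‖f y - 2 * (∫ w, (p t y w : ℂ) * f w ∂μ) +
            ∫ w, (p (2 * t) y w : ℂ) * f w ∂μ‖₊ : ℝ≥0∞) ^ 2 ∂μ)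
      ≤ 8 * ((μ B)⁻¹ * ∫⁻ y in B, (‖u y‖₊ : ℝ≥0∞) ^ 2 ∂μ)
        + (2*K) * ((μ Bbig)⁻¹ * ∫⁻ y in Bbig, (‖v y‖₊ : ℝ≥0∞) ^ 2 ∂μ) := by
    calc (μ B)⁻¹ * _ ≤ (μ B)⁻¹ *
        (8 * (∫⁻ y in B, (‖u y‖₊ : ℝ≥0∞) ^ 2 ∂μ)
          + 2 * (∫⁻ y in B, (‖v y‖₊ : ℝ≥0∞) ^ 2 ∂μ)) := mul_le_mul_right hsplit _
      _ = 8 * ((μ B)⁻¹ * ∫⁻ y in B, (‖u y‖₊ : ℝ≥0∞) ^ 2 ∂μ)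
          + 2 * ((μ B)⁻¹ * ∫⁻ y in B, (‖v y‖₊ : ℝ≥0∞) ^ 2 ∂μ) := by ring
      _ ≤ 8 * ((μ B)⁻¹ * ∫⁻ y in B, (‖u y‖₊ : ℝ≥0∞) ^ 2 ∂μ)
          + 2 * ((K * (μ Bbig)⁻¹) * ∫⁻ y in Bbig, (‖v y‖₊ : ℝ≥0∞) ^ 2 ∂μ) := by
            exact add_le_add_right (mul_le_mul_right (mul_le_mul' hinv hIv) 2) _
      _ = 8 * ((μ B)⁻¹ * ∫⁻ y in B, (‖u y‖₊ : ℝ≥0∞) ^ 2 ∂μ)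
          + (2*K) * ((μ Bbig)⁻¹ * ∫⁻ y in Bbig, (‖v y‖₊ : ℝ≥0∞) ^ 2 ∂μ) := by ring
  have e8 : ((8:ℝ≥0∞)) ^ ((1:ℝ)/2) = ENNReal.ofReal ((8:ℝ)^((1:ℝ)/2)) := by
    rw [show (8:ℝ≥0∞) = ENNReal.ofReal (8:ℝ) by norm_num,
      ENNReal.ofReal_rpow_of_pos (by norm_num : (0:ℝ) < 8)]
  have e2 : ((2*K):ℝ≥0∞) ^ ((1:ℝ)/2) = ENNReal.ofReal (((2*KR):ℝ)^((1:ℝ)/2)) := by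
    rw [hK_def, show (2:ℝ≥0∞) = ENNReal.ofReal (2:ℝ) by norm_num,
      ← ENNReal.ofReal_mul (by norm_num : (0:ℝ) ≤ 2),
      ENNReal.ofReal_rpow_of_pos (by linarith : (0:ℝ) < 2*KR)]
  have hconst : ENNReal.ofReal C = (8:ℝ≥0∞) ^ ((1:ℝ)/2) + (2*K) ^ ((1:ℝ)/2) := by
    rw [hC_def, ENNReal.ofReal_add (by positivity) (by positivity), e8, e2]
  calc ((μ B)⁻¹ *
      ∫⁻ y in B,
        (‖f y - 2 * (∫ w, (p t y w : ℂ) * f w ∂μ) +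
            ∫ w, (p (2 * t) y w : ℂ) * f w ∂μ‖₊ : ℝ≥0∞) ^ 2 ∂μ) ^ ((1:ℝ)/2)
      ≤ (8 * ((μ B)⁻¹ * ∫⁻ y in B, (‖u y‖₊ : ℝ≥0∞) ^ 2 ∂μ)
          + (2*K) * ((μ Bbig)⁻¹ * ∫⁻ y in Bbig, (‖v y‖₊ : ℝ≥0∞) ^ 2 ∂μ)) ^ ((1:ℝ)/2) :=
        ENNReal.rpow_le_rpow hmain (by norm_num)
    _ ≤ (8 * ((μ B)⁻¹ * ∫⁻ y in B, (‖u y‖₊ : ℝ≥0∞) ^ 2 ∂μ)) ^ ((1:ℝ)/2)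
        + ((2*K) * ((μ Bbig)⁻¹ * ∫⁻ y in Bbig, (‖v y‖₊ : ℝ≥0∞) ^ 2 ∂μ)) ^ ((1:ℝ)/2) :=
        ENNReal.rpow_add_le_add_rpow _ _ (by norm_num) (by norm_num)
    _ = (8:ℝ≥0∞) ^ ((1:ℝ)/2) * (((μ B)⁻¹ * ∫⁻ y in B, (‖u y‖₊ : ℝ≥0∞) ^ 2 ∂μ)) ^ ((1:ℝ)/2)
        + (2*K) ^ ((1:ℝ)/2) * (((μ Bbig)⁻¹ * ∫⁻ y in Bbig, (‖v y‖₊ : ℝ≥0∞) ^ 2 ∂μ)) ^ ((1:ℝ)/2) := by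
        rw [ENNReal.mul_rpow_of_nonneg 8 ((μ B)⁻¹ * ∫⁻ y in B, (‖u y‖₊ : ℝ≥0∞) ^ 2 ∂μ)
            (by norm_num : (0:ℝ) ≤ 1/2),
          ENNReal.mul_rpow_of_nonneg (2*K)
            ((μ Bbig)⁻¹ * ∫⁻ y in Bbig, (‖v y‖₊ : ℝ≥0∞) ^ 2 ∂μ)
            (by norm_num : (0:ℝ) ≤ 1/2)]
    _ ≤ (8:ℝ≥0∞) ^ ((1:ℝ)/2) * N + (2*K) ^ ((1:ℝ)/2) * N :=
        add_le_add (mul_le_mul_right h1 _) (mul_le_mul_right h2 _)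
    _ = ENNReal.ofReal C * N := by rw [hconst, add_mul]
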